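/- Let R : [0, ℓ] → ℝⁿ be a C² arc-length parametrized curve with unit tangent T(s) = R'(s), and let N₁(s), …, N_{n-1}(s) be a continuously differentiable orthonormal frame of the normal space along the curve. Consider the tube map Φ(s, y) = R(s) + ∑_{i=1}^{n-1} y_i N_i(s) defined for s ∈ [0, ℓ] and y in the (n-1)-dimensional ball of radius r. Then the Jacobian determinant of Φ equals J(s,y) = 1 + ∑_{i=1}^{n-1} y_i k_i(s), where k_i(s) = ⟨T(s), N_i'(s)⟩. -/

import Mathlib

open scoped BigOperators

/-- Tube-coordinate Jacobian: for a `C²` arc-length curve `R` in `ℝ^(m+1)` with unit tangent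
`T(s) = R'(s)` and a `C¹` orthonormal normal frame `N₁,…,N_m`, the Jacobian determinant of
`Φ(s,y) = R(s) + ∑ yᵢ Nᵢ(s)` (computed w.r.t. an orthonormal basis in which the frame has
determinant `1`) equals `1 + ∑ yᵢ kᵢ(s)` with `kᵢ(s) = ⟨T(s), Nᵢ'(s)⟩`. -/
theorem stmt_10 (m : ℕ) (ℓ r : ℝ) (hℓ : 0 < ℓ) (hr : 0 < r)
    (R : ℝ → EuclideanSpace ℝ (Fin (m + 1)))
    (N : Fin m → ℝ → EuclideanSpace ℝ (Fin (m + 1)))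
    (hR : ContDiff ℝ 2 R) (hN : ∀ i, ContDiff ℝ 1 (N i))
    (horth : ∀ s ∈ Set.Icc (0:ℝ) ℓ,
      Orthonormal ℝ (Fin.cons (deriv R s) (fun i => N i s) : Fin (m + 1) → _))
    (b : OrthonormalBasis (Fin (m + 1)) ℝ (EuclideanSpace ℝ (Fin (m + 1))))
    (hdet : ∀ s ∈ Set.Icc (0:ℝ) ℓ,
      b.toBasis.det (Fin.cons (deriv R s) (fun i => N i s)) = 1) :
    ∀ s ∈ Set.Icc (0:ℝ) ℓ, ∀ y : EuclideanSpace ℝ (Fin m), ‖y‖ < r →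
      b.toBasis.det
          (Fin.cons (deriv R s + ∑ i, y i • deriv (N i) s) (fun i => N i s))
        = 1 + ∑ i, y i * (inner ℝ (deriv R s) (deriv (N i) s) : ℝ) := by
  intro s hs y hy
  set T := deriv R s with hT
  set f : Fin (m + 1) → EuclideanSpace ℝ (Fin (m + 1)) :=
    Fin.cons T (fun i => N i s) with hf
  have horth' : Orthonormal ℝ f := horth s hs
  set w : EuclideanSpace ℝ (Fin (m + 1)) := ∑ i, y i • deriv (N i) s with hw
  have hcard : Fintype.card (Fin (m + 1)) =
      Module.finrank ℝ (EuclideanSpace ℝ (Fin (m + 1))) := by simp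
  let B : Module.Basis (Fin (m + 1)) ℝ (EuclideanSpace ℝ (Fin (m + 1))) :=
    basisOfOrthonormalOfCardEqFinrank horth' hcard
  have hB : (B : Fin (m + 1) → _) = f := coe_basisOfOrthonormalOfCardEqFinrank horth' hcard
  have horthB : Orthonormal ℝ (B : Fin (m + 1) → _) := hB ▸ horth'
  let O : OrthonormalBasis (Fin (m + 1)) ℝ (EuclideanSpace ℝ (Fin (m + 1))) :=
    B.toOrthonormalBasis horthB
  have hO : ∀ i, O i = f i := by
    intro i
    have h := congrFun (B.coe_toOrthonormalBasis horthB) i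
    rw [h]; exact congrFun hB i
  -- decompose w in the frame
  have hwdec : w = ∑ j, (inner ℝ (f j) w : ℝ) • f j := by
    conv_lhs => rw [← O.sum_repr' w]
    exact Finset.sum_congr rfl fun j _ => by rw [hO]
  have hupd : ∀ v : EuclideanSpace ℝ (Fin (m + 1)),
      (Fin.cons v (fun i => N i s) : Fin (m + 1) → _) = Function.update f 0 v := by
    intro v; rw [hf, Fin.update_cons_zero]
  have hdet1 : b.toBasis.det f = 1 := hdet s hs
  have hzero : ∀ j : Fin m,
      b.toBasis.det (Function.update f 0 (f j.succ)) = 0 := by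
    intro j
    refine b.toBasis.det.map_eq_zero_of_eq _ (i := 0) (j := j.succ) ?_ (Fin.succ_ne_zero j).symm
    rw [Function.update_self, Function.update_of_ne (Fin.succ_ne_zero j)]
  calc b.toBasis.det (Fin.cons (T + w) fun i => N i s)
      = b.toBasis.det (Function.update f 0 T)
        + b.toBasis.det (Function.update f 0 w) := by
        rw [hupd]; exact b.toBasis.det.map_update_add f 0 T w
    _ = 1 + ∑ i, y i * (inner ℝ T (deriv (N i) s) : ℝ) := by
        have hT0 : Function.update f 0 T = f := by
          rw [hf, Fin.update_cons_zero]
        rw [hT0, hdet1]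
        congr 1
        rw [hwdec, b.toBasis.det.map_update_sum]
        rw [Fin.sum_univ_succ]
        simp only [b.toBasis.det.map_update_smul]
        have h0 : Function.update f 0 (f 0) = f := Function.update_eq_self _ _
        rw [h0, hdet1]
        simp only [hzero, smul_zero, smul_eq_mul, mul_zero, Finset.sum_const_zero, add_zero, mul_one]
        have : (inner ℝ (f 0) w : ℝ) = ∑ i, y i * (inner ℝ T (deriv (N i) s) : ℝ) := by
          rw [hw, inner_sum]
          refine Finset.sum_congr rfl fun i _ => ?_
          rw [real_inner_smul_right]
          congr 1
        exact this
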